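/- Let n ≥ 1 and k ≥ 1, and let M_n denote the C*-algebra of n×n complex matrices. Then Gen_k(M_n)_sa is an open subset of (M_n)^k_sa. -/

import Mathlib

/-- The entries of a tuple of `n × n` complex matrices generate `M_n` as a C*-algebra:
the smallest closed `*`-subalgebra containing them is all of `M_n`. -/
def MatGenerates {n k : ℕ} (a : Fin k → Matrix (Fin n) (Fin n) ℂ) : Prop :=
  (NonUnitalStarAlgebra.adjoin ℂ (Set.range a)).topologicalClosure = ⊤

section Aux

variable {n k : ℕ}

local notation "M" => Matrix (Fin n) (Fin n) ℂ

/-- evaluation of a word -/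
noncomputable def wev (b : Fin k → M) (l : List (Fin k)) : M := (l.map b).prod

lemma continuous_wev (l : List (Fin k)) : Continuous fun b : Fin k → M => wev b l := by
  induction l with
  | nil => simpa [wev] using continuous_const
  | cons i t ih =>
    simp only [wev, List.map_cons, List.prod_cons]
    exact (continuous_apply i).mul ih

lemma wev_mem (S : NonUnitalStarSubalgebra ℂ M) (b : Fin k → M) (hb : ∀ i, b i ∈ S)
    {l : List (Fin k)} (hl : l ≠ []) : wev b l ∈ S := by
  induction l with
  | nil => exact absurd rfl hl
  | cons i t ih =>
    rcases eq_or_ne t [] with rfl | ht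
    · simpa [wev] using hb i
    · simpa only [wev, List.map_cons, List.prod_cons] using mul_mem (hb i) (ih ht)

lemma isOpen_li {ι : Type} [Finite ι] :
    IsOpen {f : ι → M | LinearIndependent ℂ f} := by
  let b0 := Module.finBasis ℂ M
  let ℓ := b0.equivFun
  have hc : Continuous ℓ.toLinearMap := ℓ.toLinearMap.continuous_of_finiteDimensional
  have hset : {f : ι → M | LinearIndependent ℂ f} =
      (fun f : ι → M => fun i => ℓ (f i)) ⁻¹' {g | LinearIndependent ℂ g} := by
    ext f
    exact (ℓ.toLinearMap.linearIndependent_iff ℓ.ker).symm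
  rw [hset]
  exact isOpen_setOf_linearIndependent.preimage
    (continuous_pi fun i => hc.comp (continuous_apply i))

lemma exists_word {a : Fin k → M} {x : M} (hx : x ∈ Subsemigroup.closure (Set.range a)) :
    ∃ w : List (Fin k), w ≠ [] ∧ wev a w = x := by
  induction hx using Subsemigroup.closure_induction with
  | mem y hy =>
    obtain ⟨i, rfl⟩ := hy
    exact ⟨[i], by simp, by simp [wev]⟩
  | mul y z _ _ hy hz =>
    obtain ⟨w1, hw1, hy'⟩ := hy
    obtain ⟨w2, hw2, hz'⟩ := hz
    exact ⟨w1 ++ w2, by simp [hw1], by simp [wev, ← hy', ← hz']⟩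

lemma gen_of_adjoin_top {b : Fin k → M}
    (h : NonUnitalStarAlgebra.adjoin ℂ (Set.range b) = ⊤) : MatGenerates b := by
  rw [MatGenerates, h]
  apply SetLike.coe_injective
  simp [NonUnitalStarSubalgebra.topologicalClosure]
  rfl

theorem aux_open {a : Fin k → M} (ha_sa : ∀ i, IsSelfAdjoint (a i)) (ha : MatGenerates a) :
    ∃ V : Set (Fin k → M), IsOpen V ∧ a ∈ V ∧ ∀ b ∈ V, MatGenerates b := by
  set S := NonUnitalStarAlgebra.adjoin ℂ (Set.range a) with hS
  -- the adjoin is closed, being finite-dimensional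
  have hclosed : IsClosed (S : Set M) := by
    have := Submodule.closed_of_finiteDimensional (S.toNonUnitalSubalgebra.toSubmodule)
    simpa using this
  have hST : (S : Set M) = Set.univ := by
    have h1 : (S.topologicalClosure : Set M) = ((⊤ : NonUnitalStarSubalgebra ℂ M) : Set M) :=
      congrArg SetLike.coe ha
    have h2 : (S.topologicalClosure : Set M) = closure (S : Set M) := rfl
    rw [h2, hclosed.closure_eq] at h1
    simpa using h1
  -- span of words = ⊤
  have hstar : Set.range a ∪ star (Set.range a) = Set.range a := by
    apply Set.union_eq_self_of_subset_right
    intro x hx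
    rw [Set.mem_star] at hx
    obtain ⟨i, hi⟩ := hx
    exact ⟨i, by rw [← (ha_sa i).star_eq, hi, star_star]⟩
  have hspan : Submodule.span ℂ (Subsemigroup.closure (Set.range a) : Set M) = ⊤ := by
    have h3 := NonUnitalStarAlgebra.adjoin_eq_span (R := ℂ) (Set.range a)
    rw [hstar] at h3
    rw [← h3]
    rw [eq_top_iff]
    intro x _
    show x ∈ S.toNonUnitalSubalgebra.toSubmodule
    have : x ∈ (S : Set M) := by rw [hST]; trivial
    exact this
  -- extract a finite linearly independent spanning subset
  obtain ⟨t, hts, htspan, htli⟩ :=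
    exists_linearIndependent ℂ (Subsemigroup.closure (Set.range a) : Set M)
  rw [hspan] at htspan
  have htfin : t.Finite := htli.setFinite
  haveI : Fintype t := htfin.fintype
  -- t is a basis
  let B : Module.Basis t ℂ M := Module.Basis.mk htli (by rw [Subtype.range_coe]; exact htspan.ge)
  have hcard : Fintype.card t = Module.finrank ℂ M := (Module.finrank_eq_card_basis B).symm
  -- each element of t is a word in a
  have hword : ∀ x : t, ∃ w : List (Fin k), w ≠ [] ∧ wev a w = (x : M) :=
    fun x => exists_word (hts x.2)
  choose W hW1 hW2 using hword
  -- the open set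
  refine ⟨(fun b : Fin k → M => fun x : t => wev b (W x)) ⁻¹' {f | LinearIndependent ℂ f},
    isOpen_li.preimage (continuous_pi fun x => continuous_wev (W x)), ?_, ?_⟩
  · show LinearIndependent ℂ fun x : t => wev a (W x)
    have heq : (fun x : t => wev a (W x)) = fun x : t => (x : M) := funext fun x => hW2 x
    rw [heq]
    exact htli
  · intro b hb
    have hli : LinearIndependent ℂ fun x : t => wev b (W x) := hb
    have hbspan : Submodule.span ℂ (Set.range fun x : t => wev b (W x)) = ⊤ :=
      hli.span_eq_top_of_card_eq_finrank' hcard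
    apply gen_of_adjoin_top
    apply SetLike.coe_injective
    apply Set.eq_univ_of_univ_subset
    intro x _
    have hle : Submodule.span ℂ (Set.range fun x : t => wev b (W x)) ≤
        (NonUnitalStarAlgebra.adjoin ℂ (Set.range b)).toNonUnitalSubalgebra.toSubmodule := by
      rw [Submodule.span_le]
      rintro _ ⟨y, rfl⟩
      exact wev_mem _ b (fun i => NonUnitalStarAlgebra.subset_adjoin ℂ (Set.range b) (Set.mem_range_self i)) (hW1 y)
    exact hle (hbspan ▸ Submodule.mem_top)

end Aux

/-- For `n, k ≥ 1`, the set `Gen_k(M_n)_sa` of generating self-adjoint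
`k`-tuples is an open subset of `(M_n)^k_sa` (with its subspace topology). -/
theorem gen_matrix_isOpen {n k : ℕ} (hn : 1 ≤ n) (hk : 1 ≤ k) :
    IsOpen {a : {x : Fin k → Matrix (Fin n) (Fin n) ℂ // ∀ i, IsSelfAdjoint (x i)} |
      MatGenerates a.1} := by
  rw [isOpen_iff_mem_nhds]
  rintro ⟨a, ha_sa⟩ hgen
  obtain ⟨V, hVo, haV, hV⟩ := aux_open ha_sa hgen
  rw [mem_nhds_iff]
  exact ⟨Subtype.val ⁻¹' V, fun y hy => hV y.1 hy, hVo.preimage continuous_subtype_val, haV⟩
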